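/- arXiv:0912.3694 — 5 statements merged into one kernel-verified Lean document; each statement's English description precedes it below -/
import Mathlib

section
/- Let H be a real Hilbert space, A : H → H a continuous self-adjoint nonnegative linear operator, and v : [0,∞) → H continuously differentiable with v'(t) = -A v(t) for all t ≥ 0. Then for every t > 0, |A^{1/2} v(t)|² ≤ |v(0)|² / (2t). -/
open scoped RealInnerProductSpace

theorem stmt_5 {H : Type*} [NormedAddCommGroup H] [InnerProductSpace ℝ H] [CompleteSpace H]
    (A : H →L[ℝ] H)
    (hA_sa : ∀ x y : H, ⟪A x, y⟫ = ⟪x, A y⟫)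
    (hA_nn : ∀ x : H, 0 ≤ ⟪A x, x⟫)
    (v : ℝ → H)
    (hv : ∀ t ≥ (0:ℝ), HasDerivAt v (-(A (v t))) t) :
    ∀ t > (0:ℝ), ⟪A (v t), v t⟫ ≤ ‖v 0‖ ^ 2 / (2 * t) := by
  intro T hT
  set g : ℝ → ℝ := fun t => ⟪A (v t), v t⟫ with hg
  -- derivative of t ↦ A (v t)
  have hAv : ∀ t ≥ (0:ℝ), HasDerivAt (fun t => A (v t)) (A (-(A (v t)))) t := by
    intro t ht
    exact (A.hasFDerivAt.comp_hasDerivAt t (hv t ht))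
  have hg' : ∀ t ≥ (0:ℝ), HasDerivAt g (-(2 * ‖A (v t)‖ ^ 2)) t := by
    intro t ht
    have h := (hAv t ht).inner ℝ (hv t ht)
    convert h using 1
    case e'_4 => rfl
    case e'_5 => rfl
    have h1 : ⟪A (-(A (v t))), v t⟫ = -⟪A (v t), A (v t)⟫ := by
      rw [map_neg, inner_neg_left, hA_sa]
    rw [h1, inner_neg_right, real_inner_self_eq_norm_sq]
    ring
  -- g is antitone on Icc 0 T
  have hgcont : ContinuousOn g (Set.Icc 0 T) := fun t ht =>
    ((hg' t ht.1).continuousAt).continuousWithinAt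
  have hgant : AntitoneOn g (Set.Icc 0 T) := by
    apply antitoneOn_of_deriv_nonpos (convex_Icc 0 T) hgcont
    · intro t ht
      rw [interior_Icc] at ht
      exact ((hg' t ht.1.le).differentiableAt).differentiableWithinAt
    · intro t ht
      rw [interior_Icc] at ht
      rw [(hg' t ht.1.le).deriv]
      have := sq_nonneg ‖A (v t)‖; linarith
  -- φ
  set φ : ℝ → ℝ := fun s => ⟪v s, v s⟫ + 2 * s * g T with hφ
  have hφ' : ∀ s ≥ (0:ℝ), HasDerivAt φ (-(2 * g s) + 2 * g T) s := by
    intro s hs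
    have h1 : HasDerivAt (fun s => (⟪v s, v s⟫ : ℝ)) (-(2 * g s)) s := by
      have h := (hv s hs).inner ℝ (hv s hs)
      convert h using 1
      case e'_4 => rfl
      case e'_5 => rfl
      rw [inner_neg_left, inner_neg_right, real_inner_comm]
      simp [hg]; ring
    have h2 : HasDerivAt (fun s : ℝ => 2 * s * g T) (2 * g T) s := by
      simpa using ((hasDerivAt_id s).const_mul 2).mul_const (g T)
    exact h1.add h2
  have hφant : AntitoneOn φ (Set.Icc 0 T) := by
    apply antitoneOn_of_deriv_nonpos (convex_Icc 0 T)
    · exact fun s hs => ((hφ' s hs.1).continuousAt).continuousWithinAt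
    · intro s hs
      rw [interior_Icc] at hs
      exact ((hφ' s hs.1.le).differentiableAt).differentiableWithinAt
    · intro s hs
      rw [interior_Icc] at hs
      rw [(hφ' s hs.1.le).deriv]
      have : g T ≤ g s := hgant ⟨hs.1.le, hs.2.le⟩ ⟨hs.1.le.trans hs.2.le, le_refl T⟩ hs.2.le
      linarith
  have key : φ T ≤ φ 0 := hφant (Set.left_mem_Icc.2 hT.le) (Set.right_mem_Icc.2 hT.le) hT.le
  simp only [hφ, mul_zero, zero_mul, add_zero] at key
  have hvT : (0:ℝ) ≤ ⟪v T, v T⟫ := real_inner_self_nonneg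
  have h0 : ⟪v 0, v 0⟫ = ‖v 0‖ ^ 2 := real_inner_self_eq_norm_sq _
  rw [le_div_iff₀ (by linarith : (0:ℝ) < 2 * T)]
  have : g T * (2 * T) = 2 * T * g T := by ring
  rw [this]
  linarith
end

section
/- Let H be a real Hilbert space, A : H → H a continuous self-adjoint nonnegative linear operator, and v : [0,∞) → H continuously differentiable with v'(t) = -A v(t) for all t ≥ 0. Then for every t > 0, |A v(t)|² ≤ |v(0)|² / (2t²). -/
open scoped RealInnerProductSpace

theorem stmt_6 {H : Type*} [NormedAddCommGroup H] [InnerProductSpace ℝ H] [CompleteSpace H]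
    (A : H →L[ℝ] H)
    (hA_sa : ∀ x y : H, ⟪A x, y⟫ = ⟪x, A y⟫)
    (hA_nn : ∀ x : H, 0 ≤ ⟪A x, x⟫)
    (v : ℝ → H)
    (hv : ∀ t ≥ (0:ℝ), HasDerivAt v (-(A (v t))) t) :
    ∀ t > (0:ℝ), ‖A (v t)‖ ^ 2 ≤ ‖v 0‖ ^ 2 / (2 * t ^ 2) := by
  set φ : ℝ → ℝ := fun s =>
    s ^ 2 * ⟪A (v s), A (v s)⟫ + s * ⟪A (v s), v s⟫ + ⟪v s, v s⟫ / 2 with hφdef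
  have hφ : ∀ s ≥ (0:ℝ), HasDerivAt φ (-2 * s ^ 2 * ⟪A (A (v s)), A (v s)⟫) s := by
    intro s hs
    have hvs := hv s hs
    have hAv : HasDerivAt (fun u => A (v u)) (A (-(A (v s)))) s :=
      (A.hasFDerivAt.comp_hasDerivAt s hvs)
    have hH : HasDerivAt (fun u => ⟪A (v u), A (v u)⟫)
        (⟪A (v s), A (-(A (v s)))⟫ + ⟪A (-(A (v s))), A (v s)⟫) s := hAv.inner ℝ hAv
    have hG : HasDerivAt (fun u => ⟪A (v u), v u⟫)
        (⟪A (v s), -(A (v s))⟫ + ⟪A (-(A (v s))), v s⟫) s := hAv.inner ℝ hvs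
    have hF : HasDerivAt (fun u => ⟪v u, v u⟫)
        (⟪v s, -(A (v s))⟫ + ⟪-(A (v s)), v s⟫) s := hvs.inner ℝ hvs
    have := (((hasDerivAt_pow 2 s).mul hH).add ((hasDerivAt_id s).mul hG)).add
      (hF.div_const 2)
    refine HasDerivAt.congr_deriv this ?_
    simp only [map_neg, inner_neg_left, inner_neg_right, pow_one, id_eq]
    have e1 : ⟪A (A (v s)), v s⟫ = ⟪A (v s), A (v s)⟫ := hA_sa _ _
    have e2 : ⟪A (v s), A (A (v s))⟫ = ⟪A (A (v s)), A (v s)⟫ := real_inner_comm _ _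
    have e3 : ⟪v s, A (v s)⟫ = ⟪A (v s), v s⟫ := real_inner_comm _ _
    rw [e2, e1, e3]
    ring
  intro t ht
  have hanti : AntitoneOn φ (Set.Icc 0 t) := by
    refine antitoneOn_of_deriv_nonpos (convex_Icc 0 t)
      (fun s hs => ((hφ s hs.1).continuousAt).continuousWithinAt)
      (fun s hs => by
        rw [interior_Icc] at hs
        exact ((hφ s hs.1.le).differentiableAt).differentiableWithinAt)
      (fun s hs => by
        rw [interior_Icc] at hs
        rw [(hφ s hs.1.le).deriv]
        have h9 : (0:ℝ) ≤ ⟪A (A (v s)), A (v s)⟫ := hA_nn _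
        nlinarith [sq_nonneg s])
  have h0t : φ t ≤ φ 0 := hanti (Set.left_mem_Icc.2 ht.le) (Set.right_mem_Icc.2 ht.le) ht.le
  have hφ0 : φ 0 = ⟪v 0, v 0⟫ / 2 := by simp [hφdef]
  have hG : (0:ℝ) ≤ ⟪A (v t), v t⟫ := hA_nn _
  have hF : (0:ℝ) ≤ ⟪v t, v t⟫ := real_inner_self_nonneg
  have key : t ^ 2 * ⟪A (v t), A (v t)⟫ ≤ ⟪v 0, v 0⟫ / 2 := by
    have := h0t
    rw [hφ0] at this
    simp only [hφdef] at this
    nlinarith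
  rw [← real_inner_self_eq_norm_sq, ← real_inner_self_eq_norm_sq,
    le_div_iff₀ (by positivity)]
  nlinarith
end

section
/- Let H be a real Hilbert space, A : H → H a continuous self-adjoint nonnegative linear operator, and v : [0,∞) → H continuously differentiable with v'(t) = -A v(t) for all t ≥ 0, with v(0) = u₀ and A^{1/2}u₀ ≠ 0. Assume A^{1/2}v(t) ≠ 0 for all t ≥ 0. Then the Rayleigh-type quotient P(t) := |A v(t)|² / |A^{1/2} v(t)|² is nonincreasing on [0,∞). -/
open scoped RealInnerProductSpace

lemma cs_psd {H : Type*} [NormedAddCommGroup H] [InnerProductSpace ℝ H]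
    (A : H →L[ℝ] H)
    (hA_sa : ∀ x y : H, ⟪A x, y⟫ = ⟪x, A y⟫)
    (hA_nn : ∀ x : H, 0 ≤ ⟪A x, x⟫) (x y : H) :
    ⟪A x, y⟫ ^ 2 ≤ ⟪A x, x⟫ * ⟪A y, y⟫ := by
  have key : ∀ t : ℝ, 0 ≤ ⟪A y, y⟫ * (t * t) + (2 * ⟪A x, y⟫) * t + ⟪A x, x⟫ := by
    intro t
    have h := hA_nn (x + t • y)
    have hsym : ⟪A y, x⟫ = ⟪A x, y⟫ := by
      rw [hA_sa y x, real_inner_comm]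
    have hexp : ⟪A (x + t • y), x + t • y⟫
        = ⟪A x, x⟫ + t * ⟪A x, y⟫ + t * ⟪A y, x⟫ + t * t * ⟪A y, y⟫ := by
      simp only [map_add, map_smul, inner_add_left, inner_add_right,
        real_inner_smul_left, real_inner_smul_right]
      ring
    rw [hexp, hsym] at h
    nlinarith [h]
  have hd := discrim_le_zero key
  rw [discrim] at hd
  nlinarith [hd]

theorem stmt_8 {H : Type*} [NormedAddCommGroup H] [InnerProductSpace ℝ H] [CompleteSpace H]
    (A : H →L[ℝ] H)
    (hA_sa : ∀ x y : H, ⟪A x, y⟫ = ⟪x, A y⟫)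
    (hA_nn : ∀ x : H, 0 ≤ ⟪A x, x⟫)
    (v : ℝ → H) (u₀ : H)
    (hv : ∀ t ≥ (0:ℝ), HasDerivAt v (-(A (v t))) t)
    (hv'' : ∀ t ≥ (0:ℝ), HasDerivAt (fun t => -(A (v t))) (A (A (v t))) t)
    (hv0 : v 0 = u₀)
    (hu₀ : ⟪A u₀, u₀⟫ ≠ 0)
    (hnz : ∀ t ≥ (0:ℝ), ⟪A (v t), v t⟫ ≠ 0) :
    AntitoneOn (fun t => ‖A (v t)‖ ^ 2 / ⟪A (v t), v t⟫) (Set.Ici (0:ℝ)) := by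
  -- derivative of t ↦ A (v t)
  have hAv : ∀ t ≥ (0:ℝ), HasDerivAt (fun t => A (v t)) (-(A (A (v t)))) t := by
    intro t ht
    have := (hv'' t ht).neg
    simpa [Pi.neg_def] using this
  -- numerator as inner product
  have hNfun : (fun t => ‖A (v t)‖ ^ 2) = fun t => ⟪A (v t), A (v t)⟫ := by
    funext t; rw [real_inner_self_eq_norm_sq]
  -- derivative of the quotient at each t ≥ 0
  have hP : ∀ t ≥ (0:ℝ), HasDerivAt (fun t => ‖A (v t)‖ ^ 2 / ⟪A (v t), v t⟫)
      (((⟪A (v t), -(A (A (v t)))⟫ + ⟪-(A (A (v t))), A (v t)⟫) * ⟪A (v t), v t⟫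
        - ⟪A (v t), A (v t)⟫ * (⟪A (v t), -(A (v t))⟫ + ⟪-(A (A (v t))), v t⟫))
        / ⟪A (v t), v t⟫ ^ 2) t := by
    intro t ht
    have hN : HasDerivAt (fun t => ⟪A (v t), A (v t)⟫)
        (⟪A (v t), -(A (A (v t)))⟫ + ⟪-(A (A (v t))), A (v t)⟫) t :=
      (hAv t ht).inner ℝ (hAv t ht)
    have hD : HasDerivAt (fun t => ⟪A (v t), v t⟫)
        (⟪A (v t), -(A (v t))⟫ + ⟪-(A (A (v t))), v t⟫) t :=
      (hAv t ht).inner ℝ (hv t ht)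
    refine HasDerivAt.congr_of_eventuallyEq (hN.div hD (hnz t ht))
      (Filter.Eventually.of_forall fun s => ?_)
    simp [real_inner_self_eq_norm_sq]
  -- the derivative is nonpositive
  have hP_nonpos : ∀ t ≥ (0:ℝ),
      ((⟪A (v t), -(A (A (v t)))⟫ + ⟪-(A (A (v t))), A (v t)⟫) * ⟪A (v t), v t⟫
        - ⟪A (v t), A (v t)⟫ * (⟪A (v t), -(A (v t))⟫ + ⟪-(A (A (v t))), v t⟫))
        / ⟪A (v t), v t⟫ ^ 2 ≤ 0 := by
    intro t ht
    apply div_nonpos_of_nonpos_of_nonneg _ (sq_nonneg _)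
    set w := v t
    have hb : ⟪A w, A w⟫ = ⟪A (A w), w⟫ := (hA_sa (A w) w).symm
    have hcs : ⟪A (A w), w⟫ ^ 2 ≤ ⟪A (A w), A w⟫ * ⟪A w, w⟫ :=
      cs_psd A hA_sa hA_nn (A w) w
    have h1 : ⟪A w, -(A (A w))⟫ = -⟪A (A w), A w⟫ := by
      rw [inner_neg_right, real_inner_comm]
    have h2 : ⟪-(A (A w)), A w⟫ = -⟪A (A w), A w⟫ := by rw [inner_neg_left]
    have h3 : ⟪A w, -(A w)⟫ = -⟪A w, A w⟫ := by rw [inner_neg_right]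
    have h4 : ⟪-(A (A w)), w⟫ = -⟪A (A w), w⟫ := by rw [inner_neg_left]
    rw [h1, h2, h3, h4, hb]
    nlinarith [hcs]
  apply antitoneOn_of_deriv_nonpos (convex_Ici 0)
  · intro t ht
    exact (hP t ht).continuousAt.continuousWithinAt
  · intro t ht
    rw [interior_Ici] at ht
    exact (hP t (le_of_lt ht)).differentiableAt.differentiableWithinAt
  · intro t ht
    rw [interior_Ici] at ht
    rw [(hP t (le_of_lt ht)).deriv]
    exact hP_nonpos t (le_of_lt ht)
end

section
/- Let H be a real Hilbert space, A : H → H a continuous self-adjoint nonnegative linear operator, and v : [0,∞) → H continuously differentiable with v'(t) = -A v(t), v(0) = u₀, and A^{1/2}u₀ ≠ 0. Assume the quotient |Av(t)|²/|A^{1/2}v(t)|² is nonincreasing in t (and A^{1/2}v(t) ≠ 0 for all t). Then |A^{1/2} v(t)|² ≥ |A^{1/2} u₀|² · exp( -2 t |A u₀|² / |A^{1/2} u₀|² ) for all t ≥ 0. -/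
open scoped RealInnerProductSpace

theorem stmt_9 {H : Type*} [NormedAddCommGroup H] [InnerProductSpace ℝ H] [CompleteSpace H]
    (A : H →L[ℝ] H)
    (hA_sa : ∀ x y : H, ⟪A x, y⟫ = ⟪x, A y⟫)
    (hA_nn : ∀ x : H, 0 ≤ ⟪A x, x⟫)
    (v : ℝ → H) (u₀ : H)
    (hv : ∀ t ≥ (0:ℝ), HasDerivAt v (-(A (v t))) t)
    (hv0 : v 0 = u₀)
    (hu₀ : ⟪A u₀, u₀⟫ ≠ 0)
    (hnz : ∀ t ≥ (0:ℝ), ⟪A (v t), v t⟫ ≠ 0)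
    (hP : AntitoneOn (fun t => ‖A (v t)‖ ^ 2 / ⟪A (v t), v t⟫) (Set.Ici (0:ℝ))) :
    ∀ t ≥ (0:ℝ),
      ⟪A (v t), v t⟫ ≥
        ⟪A u₀, u₀⟫ * Real.exp (-2 * t * ‖A u₀‖ ^ 2 / ⟪A u₀, u₀⟫) := by
  set f : ℝ → ℝ := fun t => ⟪A (v t), v t⟫ with hfdef
  have hfpos : ∀ t ≥ (0:ℝ), 0 < f t := fun t ht =>
    lt_of_le_of_ne (hA_nn (v t)) (Ne.symm (hnz t ht))
  have hf0 : f 0 = ⟪A u₀, u₀⟫ := by simp [hfdef, hv0]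
  have hf0pos : 0 < f 0 := hfpos 0 le_rfl
  set c : ℝ := 2 * ‖A u₀‖ ^ 2 / ⟪A u₀, u₀⟫ with hcdef
  have hfderiv : ∀ t ≥ (0:ℝ), HasDerivAt f (-2 * ‖A (v t)‖ ^ 2) t := by
    intro t ht
    have h1 := hv t ht
    have h2 : HasDerivAt (fun s => A (v s)) (-(A (A (v t)))) t := by
      simpa [Function.comp_def] using (A.hasFDerivAt.comp_hasDerivAt t h1)
    have h3 := h2.inner ℝ h1
    convert h3 using 1
    case e'_4 => rfl
    case e'_5 => rfl
    rw [inner_neg_right, inner_neg_left, hA_sa (A (v t)) (v t),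
      real_inner_self_eq_norm_sq]
    ring
  set g : ℝ → ℝ := fun t => f t * Real.exp (c * t) with hgdef
  have hgderiv : ∀ t ≥ (0:ℝ), HasDerivAt g
      ((-2 * ‖A (v t)‖ ^ 2) * Real.exp (c * t) + f t * (Real.exp (c * t) * c)) t := by
    intro t ht
    have he : HasDerivAt (fun s : ℝ => Real.exp (c * s)) (Real.exp (c * t) * c) t := by
      simpa using ((hasDerivAt_id t).const_mul c).exp
    exact (hfderiv t ht).mul he
  have hmono : MonotoneOn g (Set.Ici (0:ℝ)) := by
    apply monotoneOn_of_deriv_nonneg (convex_Ici 0)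
    · intro t ht
      exact ((hgderiv t ht).continuousAt).continuousWithinAt
    · intro t ht
      rw [interior_Ici] at ht
      exact ((hgderiv t (le_of_lt ht)).differentiableAt).differentiableWithinAt
    · intro t ht
      rw [interior_Ici] at ht
      have ht' : (0:ℝ) ≤ t := le_of_lt ht
      rw [(hgderiv t ht').deriv]
      have hPle : ‖A (v t)‖ ^ 2 / f t ≤ ‖A u₀‖ ^ 2 / f 0 := by
        have := hP (Set.self_mem_Ici) (Set.mem_Ici.mpr ht') ht'
        simpa [hfdef, hv0] using this
      have hft := hfpos t ht'
      have key : 2 * ‖A (v t)‖ ^ 2 ≤ c * f t := by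
        have h := (div_le_div_iff₀ hft hf0pos).mp hPle
        rw [hcdef, ← hf0]
        rw [div_mul_eq_mul_div, le_div_iff₀ hf0pos]
        nlinarith
      have hexp : 0 < Real.exp (c * t) := Real.exp_pos _
      nlinarith
  intro t ht
  have h := hmono (Set.self_mem_Ici) (Set.mem_Ici.mpr ht) ht
  have hg0 : g 0 = f 0 := by simp [hgdef]
  have hgt : g t = f t * Real.exp (c * t) := rfl
  rw [hg0, hgt] at h
  have hexp : 0 < Real.exp (c * t) := Real.exp_pos _
  have hkey : f 0 * Real.exp (-(c * t)) ≤ f t := by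
    rw [Real.exp_neg, mul_comm (f 0), ← div_eq_inv_mul, div_le_iff₀ hexp]
    linarith [h]
  have heq : -2 * t * ‖A u₀‖ ^ 2 / ⟪A u₀, u₀⟫ = -(c * t) := by
    rw [hcdef]; ring
  rw [ge_iff_le, heq, ← hf0]
  exact hkey
end

section
/- Let H be a real Hilbert space, A : H → H a continuous self-adjoint nonnegative linear operator, m : [0,∞) → [0,∞) continuous, and b : [0,∞) → (0,∞) continuous. Let v : [0,∞) → H be continuously differentiable with v'(s) = -A v(s) for all s ≥ 0, and let α : [0,∞) → [0,∞) be continuously differentiable with α(0) = 0 and b(t) α'(t) = m(|A^{1/2} v(α(t))|²) for all t ≥ 0. Then u(t) := v(α(t)) is continuously differentiable, u(0) = v(0), and b(t) u'(t) + m(|A^{1/2}u(t)|²) A u(t) = 0 for all t ≥ 0. -/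
open scoped RealInnerProductSpace

theorem stmt_10 {H : Type*} [NormedAddCommGroup H] [InnerProductSpace ℝ H] [CompleteSpace H]
    (A : H →L[ℝ] H)
    (hA_sa : ∀ x y : H, ⟪A x, y⟫ = ⟪x, A y⟫)
    (hA_nn : ∀ x : H, 0 ≤ ⟪A x, x⟫)
    (m : ℝ → ℝ) (hm_cont : ContinuousOn m (Set.Ici (0:ℝ)))
    (hm_nn : ∀ σ ≥ (0:ℝ), 0 ≤ m σ)
    (b : ℝ → ℝ) (hb_cont : ContinuousOn b (Set.Ici (0:ℝ)))
    (hb_pos : ∀ t ≥ (0:ℝ), 0 < b t)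
    (v : ℝ → H)
    (hv : ∀ s ≥ (0:ℝ), HasDerivAt v (-(A (v s))) s)
    (α α' : ℝ → ℝ)
    (hα : ∀ t ≥ (0:ℝ), HasDerivAt α (α' t) t)
    (hα'cont : ContinuousOn α' (Set.Ici (0:ℝ)))
    (hα0 : α 0 = 0)
    (hαnn : ∀ t ≥ (0:ℝ), 0 ≤ α t)
    (hαeq : ∀ t ≥ (0:ℝ), b t * α' t = m (⟪A (v (α t)), v (α t)⟫)) :
    ∃ u' : ℝ → H,
      (∀ t ≥ (0:ℝ), HasDerivAt (fun t => v (α t)) (u' t) t) ∧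
      ContinuousOn u' (Set.Ici (0:ℝ)) ∧
      v (α 0) = v 0 ∧
      (∀ t ≥ (0:ℝ),
        b t • u' t + m (⟪A (v (α t)), v (α t)⟫) • A (v (α t)) = 0) := by
  refine ⟨fun t => α' t • (-(A (v (α t)))), ?_, ?_, by rw [hα0], ?_⟩
  · intro t ht
    exact (hv (α t) (hαnn t ht)).scomp t (hα t ht)
  · have hvc : ContinuousOn v (Set.Ici (0:ℝ)) := fun s hs =>
      ((hv s hs).continuousAt).continuousWithinAt
    have hαc : ContinuousOn α (Set.Ici (0:ℝ)) := fun t ht =>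
      ((hα t ht).continuousAt).continuousWithinAt
    have hvα : ContinuousOn (fun t => v (α t)) (Set.Ici (0:ℝ)) :=
      hvc.comp hαc (fun t ht => hαnn t ht)
    exact hα'cont.smul ((A.continuous.comp_continuousOn hvα).neg)
  · intro t ht
    have h1 : b t • (α' t • (-(A (v (α t))))) = (b t * α' t) • (-(A (v (α t)))) := by
      rw [smul_smul]
    rw [h1, hαeq t ht, smul_neg, neg_add_cancel]
end
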